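/- Let G be the graph on vertices {1,…,6} with edge set {{1,3},{2,4},{3,4},{3,5},{4,6}}. Its qudit cluster state φ_G satisfies the derived correlation identities X_1 X_5† φ_G = φ_G, X_2 X_6† φ_G = φ_G, Z_1† X_3 Z_5† X_6† φ_G = φ_G, and Z_2† X_4 Z_6† X_5† φ_G = φ_G. -/

import Mathlib

open Matrix

/-- ω = exp(2πi/d), a primitive d-th root of unity. -/
noncomputable def qomega (d : ℕ) : ℂ := Complex.exp (2 * Real.pi * Complex.I / d)

/-- Generalized Pauli `Z`: `Z e_k = ω^k e_k`. -/
noncomputable def Zmat (d : ℕ) [NeZero d] : Matrix (ZMod d) (ZMod d) ℂ :=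
  Matrix.diagonal fun k => qomega d ^ k.val

/-- Generalized Pauli `X`: `X e_k = e_{k-1}` (index mod d). -/
noncomputable def Xmat (d : ℕ) [NeZero d] : Matrix (ZMod d) (ZMod d) ℂ :=
  Matrix.of fun j k => if k = j + 1 then 1 else 0

/-- The one-qudit operator `A` acting on the tensor factor at site `a`. -/
noncomputable def siteOp (d : ℕ) [NeZero d] {V : Type} [Fintype V] [DecidableEq V]
    (a : V) (A : Matrix (ZMod d) (ZMod d) ℂ) : Matrix (V → ZMod d) (V → ZMod d) ℂ :=
  Matrix.of fun j k => if ∀ b, b ≠ a → j b = k b then A (j a) (k a) else 0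

/-- The qudit cluster state `φ_G(k) = d^{−6/2} ω^{∑_{{a,b}∈E} k_a k_b}` of the graph `G`
on vertices `{1,…,6}` with edge set `{{1,3},{2,4},{3,4},{3,5},{4,6}}`
(vertices indexed here by `Fin 6` as 0,…,5, so the edges are
`{0,2},{1,3},{2,3},{2,4},{3,5}`). -/
noncomputable def sixGraphState (d : ℕ) [NeZero d] : (Fin 6 → ZMod d) → ℂ :=
  fun k => (Real.sqrt ((d : ℝ) ^ 6))⁻¹ *
    qomega d ^ ((k 0).val * (k 2).val + (k 1).val * (k 3).val + (k 2).val * (k 3).val +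
      (k 2).val * (k 4).val + (k 3).val * (k 5).val)

lemma qomega_pow_d (d : ℕ) [NeZero d] : qomega d ^ d = 1 := by
  rw [qomega, ← Complex.exp_nat_mul]
  have hd : (d : ℂ) ≠ 0 := Nat.cast_ne_zero.mpr (NeZero.ne d)
  rw [mul_div_assoc', mul_comm, mul_div_assoc, div_self hd, mul_one, Complex.exp_two_pi_mul_I]

lemma qpow_congr (d : ℕ) [NeZero d] {m n : ℕ} (h : (m : ZMod d) = n) :
    qomega d ^ m = qomega d ^ n := by
  have h' : m % d = n % d := (ZMod.natCast_eq_natCast_iff m n d).mp h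
  rw [pow_eq_pow_mod m (qomega_pow_d d), pow_eq_pow_mod n (qomega_pow_d d), h']

lemma conj_qpow (d : ℕ) [NeZero d] (n : ℕ) :
    (starRingEnd ℂ) (qomega d ^ n) = qomega d ^ ((d - 1) * n) := by
  have h1 : (starRingEnd ℂ) (qomega d) = qomega d ^ (d - 1) := by
    have hmul : qomega d * qomega d ^ (d - 1) = 1 := by
      rw [← pow_succ', Nat.sub_add_cancel (Nat.one_le_iff_ne_zero.mpr (NeZero.ne d)),
        qomega_pow_d]
    have hinv : (qomega d)⁻¹ = qomega d ^ (d - 1) := inv_eq_of_mul_eq_one_right hmul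
    have hc : (starRingEnd ℂ) (2 * Real.pi * Complex.I / d) = -(2 * Real.pi * Complex.I / d) := by
      simp [map_div₀, Complex.conj_I, map_ofNat]
      ring
    rw [← hinv, qomega, ← Complex.exp_conj, hc, Complex.exp_neg]
  rw [map_pow, h1, ← pow_mul]

-- siteOp action lemmas
lemma siteOp_X_mulVec (d : ℕ) [NeZero d] {V : Type} [Fintype V] [DecidableEq V]
    (a : V) (φ : (V → ZMod d) → ℂ) (j : V → ZMod d) :
    (siteOp d a (Xmat d)).mulVec φ j = φ (Function.update j a (j a + 1)) := by
  have key : ∀ k, siteOp d a (Xmat d) j k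
      = if k = Function.update j a (j a + 1) then (1 : ℂ) else 0 := by
    intro k
    simp only [siteOp, Xmat, Matrix.of_apply]
    by_cases hk : k = Function.update j a (j a + 1)
    · subst hk; simp [Function.update]
    · rw [if_neg hk]
      by_cases h1 : ∀ b, b ≠ a → j b = k b
      · rw [if_pos h1]
        have : ¬ k a = j a + 1 := by
          intro h2
          apply hk; funext b
          by_cases hb : b = a
          · subst hb; simp [Function.update, h2]
          · simp [Function.update, hb, (h1 b hb).symm]
        simp [this]
      · rw [if_neg h1]
  unfold Matrix.mulVec dotProduct
  simp only [key, ite_mul, one_mul, zero_mul]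
  rw [Finset.sum_ite_eq' Finset.univ]
  simp

lemma siteOp_X_conjT_mulVec (d : ℕ) [NeZero d] {V : Type} [Fintype V] [DecidableEq V]
    (a : V) (φ : (V → ZMod d) → ℂ) (j : V → ZMod d) :
    (siteOp d a (Xmat d))ᴴ.mulVec φ j = φ (Function.update j a (j a - 1)) := by
  have key : ∀ k, (siteOp d a (Xmat d))ᴴ j k
      = if k = Function.update j a (j a - 1) then (1 : ℂ) else 0 := by
    intro k
    simp only [Matrix.conjTranspose_apply, siteOp, Xmat, Matrix.of_apply]
    by_cases hk : k = Function.update j a (j a - 1)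
    · subst hk
      have h2 : j a = j a - 1 + 1 := by ring
      simp [Function.update, ← h2]
    · by_cases h1 : ∀ b, b ≠ a → k b = j b
      · rw [if_pos h1]
        have : ¬ j a = k a + 1 := by
          intro h2
          apply hk; funext b
          by_cases hb : b = a
          · subst hb; simp [Function.update, h2]
          · simp [Function.update, hb, h1 b hb]
        simp [this, hk]
      · simp [h1, hk]
  unfold Matrix.mulVec dotProduct
  simp only [key, ite_mul, one_mul, zero_mul]
  rw [Finset.sum_ite_eq' Finset.univ]
  simp

lemma siteOp_Z_conjT_mulVec (d : ℕ) [NeZero d] {V : Type} [Fintype V] [DecidableEq V]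
    (a : V) (φ : (V → ZMod d) → ℂ) (j : V → ZMod d) :
    (siteOp d a (Zmat d))ᴴ.mulVec φ j = qomega d ^ ((d - 1) * (j a).val) * φ j := by
  have key : ∀ k, (siteOp d a (Zmat d))ᴴ j k
      = if k = j then qomega d ^ ((d - 1) * (j a).val) else 0 := by
    intro k
    simp only [Matrix.conjTranspose_apply, siteOp, Zmat, Matrix.of_apply, Matrix.diagonal_apply]
    by_cases hk : k = j
    · subst hk; simp [← map_pow, conj_qpow]
    · by_cases h1 : ∀ b, b ≠ a → k b = j b
      · rw [if_pos h1]
        have : ¬ k a = j a := by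
          intro h2
          apply hk; funext b
          by_cases hb : b = a
          · subst hb; exact h2
          · exact h1 b hb
        simp [this, hk]
      · simp [h1, hk]
  unfold Matrix.mulVec dotProduct
  simp only [key, ite_mul, zero_mul]
  rw [Finset.sum_ite_eq' Finset.univ]
  simp
section
variable (d : ℕ) [NeZero d]
example : True := trivial
end

lemma val_castZ (d : ℕ) [NeZero d] (a : ZMod d) : ((a.val : ZMod d)) = a :=
  (ZMod.natCast_val a).trans (ZMod.cast_id d a)

lemma dm1_cast (d : ℕ) [NeZero d] : ((d - 1 : ℕ) : ZMod d) = -1 := by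
  rw [Nat.cast_sub (Nat.one_le_iff_ne_zero.mpr (NeZero.ne d)), ZMod.natCast_self]
  ring


/-- the cluster state of the above six-vertex graph satisfies the derived
correlation identities `X₁ X₅† φ_G = φ_G`, `X₂ X₆† φ_G = φ_G`,
`Z₁† X₃ Z₅† X₆† φ_G = φ_G`, and `Z₂† X₄ Z₆† X₅† φ_G = φ_G`. -/
theorem six_qudit_graph_state_identities (d : ℕ) [NeZero d] (hd : 2 ≤ d) :
    (siteOp d (0 : Fin 6) (Xmat d) * (siteOp d (4 : Fin 6) (Xmat d))ᴴ).mulVec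
      (sixGraphState d) = sixGraphState d ∧
    (siteOp d (1 : Fin 6) (Xmat d) * (siteOp d (5 : Fin 6) (Xmat d))ᴴ).mulVec
      (sixGraphState d) = sixGraphState d ∧
    ((siteOp d (0 : Fin 6) (Zmat d))ᴴ * siteOp d (2 : Fin 6) (Xmat d) *
        (siteOp d (4 : Fin 6) (Zmat d))ᴴ * (siteOp d (5 : Fin 6) (Xmat d))ᴴ).mulVec
      (sixGraphState d) = sixGraphState d ∧
    ((siteOp d (1 : Fin 6) (Zmat d))ᴴ * siteOp d (3 : Fin 6) (Xmat d) *
        (siteOp d (5 : Fin 6) (Zmat d))ᴴ * (siteOp d (4 : Fin 6) (Xmat d))ᴴ).mulVec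
      (sixGraphState d) = sixGraphState d := by
  refine ⟨?_, ?_, ?_, ?_⟩
  · funext j
    rw [← Matrix.mulVec_mulVec, siteOp_X_mulVec, siteOp_X_conjT_mulVec]
    simp only [sixGraphState, Function.update, Fin.reduceEq, reduceIte]
    congr 1
    apply qpow_congr
    push_cast [val_castZ]
    ring
  · funext j
    rw [← Matrix.mulVec_mulVec, siteOp_X_mulVec, siteOp_X_conjT_mulVec]
    simp only [sixGraphState, Function.update, Fin.reduceEq, reduceIte]
    congr 1
    apply qpow_congr
    push_cast [val_castZ]
    ring
  · funext j
    rw [← Matrix.mulVec_mulVec, ← Matrix.mulVec_mulVec, ← Matrix.mulVec_mulVec,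
      siteOp_Z_conjT_mulVec, siteOp_X_mulVec, siteOp_Z_conjT_mulVec, siteOp_X_conjT_mulVec]
    simp only [sixGraphState, Function.update, Fin.reduceEq, reduceIte, dite_true, dite_false,
      ← mul_assoc]
    rw [← pow_add, mul_right_comm, ← pow_add, mul_comm (qomega d ^ _)]
    congr 1
    apply qpow_congr
    push_cast [val_castZ, dm1_cast]
    ring
  · funext j
    rw [← Matrix.mulVec_mulVec, ← Matrix.mulVec_mulVec, ← Matrix.mulVec_mulVec,
      siteOp_Z_conjT_mulVec, siteOp_X_mulVec, siteOp_Z_conjT_mulVec, siteOp_X_conjT_mulVec]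
    simp only [sixGraphState, Function.update, Fin.reduceEq, reduceIte, dite_true, dite_false,
      ← mul_assoc]
    rw [← pow_add, mul_right_comm, ← pow_add, mul_comm (qomega d ^ _)]
    congr 1
    apply qpow_congr
    push_cast [val_castZ, dm1_cast]
    ring
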